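/- For all integers n, ℓ ≥ 3, the 3-uniform shift hypergraph Sh^{(3)}(n, ℓ) contains no copy of K_4^{(3)-}, the 3-uniform hypergraph with four vertices and three edges. -/
import Mathlib

/-- `e` is an edge of the 3-uniform shift hypergraph `Sh^(3)(n, ℓ)`: for an increasing
sequence `a 0 < a 1 < ⋯ < a (ℓ+1)` in `[n]`, the three shifted `ℓ`-element windows form
an edge. -/
def ShiftEdge3 (n ℓ : ℕ) (e : Finset (Finset ℕ)) : Prop :=
  ∃ a : ℕ → ℕ, StrictMono a ∧ (∀ j < 3 + ℓ - 1, a j ∈ Finset.Icc 1 n) ∧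
    e = { Finset.image a (Finset.Ico 0 ℓ),
          Finset.image a (Finset.Ico 1 (1 + ℓ)),
          Finset.image a (Finset.Ico 2 (2 + ℓ)) }

/-- The minimum of a finite set of naturals (0 for the empty set). -/
def mfin (s : Finset ℕ) : ℕ := if h : s.Nonempty then s.min' h else 0

lemma mfin_window (a : ℕ → ℕ) (ha : StrictMono a) (j ℓ : ℕ) (hℓ : 0 < ℓ) :
    mfin ((Finset.Ico j (j + ℓ)).image a) = a j := by
  have hjm : j ∈ Finset.Ico j (j + ℓ) := Finset.mem_Ico.2 ⟨le_refl j, by omega⟩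
  have hne : ((Finset.Ico j (j + ℓ)).image a).Nonempty :=
    ⟨a j, Finset.mem_image_of_mem a hjm⟩
  rw [mfin, dif_pos hne]
  apply le_antisymm
  · exact Finset.min'_le _ _ (Finset.mem_image_of_mem a hjm)
  · obtain ⟨i, hi, hEq⟩ := Finset.mem_image.1 (Finset.min'_mem _ hne)
    rw [← hEq]
    exact ha.monotone (Finset.mem_Ico.1 hi).1

lemma card_window_inter (a : ℕ → ℕ) (ha : StrictMono a) (p q r s : ℕ) :
    ((Finset.Ico p q).image a ∩ (Finset.Ico r s).image a).card
      = min q s - max p r := by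
  rw [← Finset.image_inter _ _ ha.injective, Finset.Ico_inter_Ico,
    Finset.card_image_of_injective _ ha.injective, Nat.card_Ico]

lemma pair_fact {n ℓ : ℕ} (hℓ : 3 ≤ ℓ) {e : Finset (Finset ℕ)} (he : ShiftEdge3 n ℓ e)
    {u v w : Finset ℕ} (hu : u ∈ e) (hv : v ∈ e) (hw : w ∈ e)
    (huv : u ≠ v) (huw : u ≠ w) (hvw : v ≠ w) :
    mfin u ≠ mfin v ∧ ((u ∩ v).card = ℓ - 2 ∨ (u ∩ v).card = ℓ - 1) ∧
      ((u ∩ v).card = ℓ - 2 ↔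
        ((mfin u < mfin w ∧ mfin w < mfin v) ∨ (mfin v < mfin w ∧ mfin w < mfin u))) := by
  obtain ⟨a, ha, -, rfl⟩ := he
  have h01 : a 0 < a 1 := ha (by omega)
  have h12 : a 1 < a 2 := ha (by omega)
  have hm0 : mfin (Finset.image a (Finset.Ico 0 ℓ)) = a 0 := by
    have := mfin_window a ha 0 ℓ (by omega); simpa using this
  have hm1 : mfin (Finset.image a (Finset.Ico 1 (1 + ℓ))) = a 1 :=
    mfin_window a ha 1 ℓ (by omega)
  have hm2 : mfin (Finset.image a (Finset.Ico 2 (2 + ℓ))) = a 2 :=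
    mfin_window a ha 2 ℓ (by omega)
  have hc01 := card_window_inter a ha 0 ℓ 1 (1 + ℓ)
  have hc10 := card_window_inter a ha 1 (1 + ℓ) 0 ℓ
  have hc02 := card_window_inter a ha 0 ℓ 2 (2 + ℓ)
  have hc20 := card_window_inter a ha 2 (2 + ℓ) 0 ℓ
  have hc12 := card_window_inter a ha 1 (1 + ℓ) 2 (2 + ℓ)
  have hc21 := card_window_inter a ha 2 (2 + ℓ) 1 (1 + ℓ)
  simp only [Finset.mem_insert, Finset.mem_singleton] at hu hv hw
  rcases hu with rfl | rfl | rfl <;> rcases hv with rfl | rfl | rfl <;>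
    rcases hw with rfl | rfl | rfl <;>
    first
      | exact absurd rfl huv
      | exact absurd rfl huw
      | exact absurd rfl hvw
      | (refine ⟨?_, ?_, ?_⟩ <;>
          simp only [hm0, hm1, hm2, hc01, hc10, hc02, hc20, hc12, hc21] <;> omega)

/-- The package of facts extracted from one shift edge on vertices with minima
`ma, mb, mc` and pairwise intersection cardinalities `cab, cac, cbc`. -/
def TFact (ℓ ma mb mc cab cac cbc : ℕ) : Prop :=
  (ma ≠ mb ∧ (cab = ℓ - 2 ↔ ((ma < mc ∧ mc < mb) ∨ (mb < mc ∧ mc < ma)))) ∧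
  (ma ≠ mc ∧ (cac = ℓ - 2 ↔ ((ma < mb ∧ mb < mc) ∨ (mc < mb ∧ mb < ma)))) ∧
  (mb ≠ mc ∧ (cbc = ℓ - 2 ↔ ((mb < ma ∧ ma < mc) ∨ (mc < ma ∧ ma < mb))))

theorem core1 {ℓ m0 m1 m2 m3 c01 c02 c03 c12 c13 c23 : ℕ} (hℓ : 3 ≤ ℓ)
    (hA : TFact ℓ m0 m1 m2 c01 c02 c12) (hB : TFact ℓ m0 m1 m3 c01 c03 c13)
    (hC : TFact ℓ m0 m2 m3 c02 c03 c23) : False := by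
  unfold TFact at hA hB hC; omega

theorem core2 {ℓ m0 m1 m2 m3 c01 c02 c03 c12 c13 c23 : ℕ} (hℓ : 3 ≤ ℓ)
    (hA : TFact ℓ m0 m1 m2 c01 c02 c12) (hB : TFact ℓ m0 m1 m3 c01 c03 c13)
    (hC : TFact ℓ m1 m2 m3 c12 c13 c23) : False := by
  unfold TFact at hA hB hC; omega

theorem core3 {ℓ m0 m1 m2 m3 c01 c02 c03 c12 c13 c23 : ℕ} (hℓ : 3 ≤ ℓ)
    (hA : TFact ℓ m0 m1 m2 c01 c02 c12) (hB : TFact ℓ m0 m2 m3 c02 c03 c23)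
    (hC : TFact ℓ m1 m2 m3 c12 c13 c23) : False := by
  unfold TFact at hA hB hC; omega

theorem core4 {ℓ m0 m1 m2 m3 c01 c02 c03 c12 c13 c23 : ℕ} (hℓ : 3 ≤ ℓ)
    (hA : TFact ℓ m0 m1 m3 c01 c03 c13) (hB : TFact ℓ m0 m2 m3 c02 c03 c23)
    (hC : TFact ℓ m1 m2 m3 c12 c13 c23) : False := by
  unfold TFact at hA hB hC; omega

set_option maxHeartbeats 2000000 in
/-- `Sh^(3)(n, ℓ)` contains no copy of `K₄^(3)-`, i.e. no four distinct vertices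
carrying three distinct edges. -/
theorem shift_hypergraph_K43minus_free (n ℓ : ℕ) (hn : 3 ≤ n) (hℓ : 3 ≤ ℓ) :
    ¬ ∃ (x : Fin 4 → Finset ℕ) (S : Fin 3 → Finset (Fin 4)),
      Function.Injective x ∧ Function.Injective S ∧ (∀ t, (S t).card = 3) ∧
      (∀ t, ShiftEdge3 n ℓ ((S t).image x)) := by
  rintro ⟨x, S, hx, hS, hcard, hedge⟩
  have key : ∀ (t : Fin 3) (i j k : Fin 4), i ≠ j → i ≠ k → j ≠ k → S t = {i, j, k} →
      TFact ℓ (mfin (x i)) (mfin (x j)) (mfin (x k))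
        ((x i ∩ x j).card) ((x i ∩ x k).card) ((x j ∩ x k).card) := by
    intro t i j k hij hik hjk hst
    have he := hedge t
    rw [hst] at he
    have himg : ({i, j, k} : Finset (Fin 4)).image x = {x i, x j, x k} := by
      simp [Finset.image_insert]
    rw [himg] at he
    have p1 := pair_fact hℓ he (by simp) (by simp) (by simp)
        (hx.ne hij) (hx.ne hik) (hx.ne hjk)
    have p2 := pair_fact hℓ he (by simp) (by simp) (by simp)
        (hx.ne hik) (hx.ne hij) (hx.ne hjk.symm)
    have p3 := pair_fact hℓ he (by simp) (by simp) (by simp)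
        (hx.ne hjk) (hx.ne hij.symm) (hx.ne hik.symm)
    exact ⟨⟨p1.1, p1.2.2⟩, ⟨p2.1, p2.2.2⟩, ⟨p3.1, p3.2.2⟩⟩
  have hfour : ∀ s : Finset (Fin 4), s.card = 3 →
      s = {0, 1, 2} ∨ s = {0, 1, 3} ∨ s = {0, 2, 3} ∨ s = {1, 2, 3} := by decide
  have h0 := hfour (S 0) (hcard 0)
  have h1 := hfour (S 1) (hcard 1)
  have h2 := hfour (S 2) (hcard 2)
  have hne01 : S 0 ≠ S 1 := fun h => absurd (hS h) (by decide)
  have hne02 : S 0 ≠ S 2 := fun h => absurd (hS h) (by decide)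
  have hne12 : S 1 ≠ S 2 := fun h => absurd (hS h) (by decide)
  have hpack := fun t : Fin 3 => (hfour (S t) (hcard t)).imp
    (fun h => And.intro h (key t 0 1 2 (by decide) (by decide) (by decide) h))
    (Or.imp (fun h => And.intro h (key t 0 1 3 (by decide) (by decide) (by decide) h))
      (Or.imp (fun h => And.intro h (key t 0 2 3 (by decide) (by decide) (by decide) h))
        (fun h => And.intro h (key t 1 2 3 (by decide) (by decide) (by decide) h))))
  rcases hpack 0 with ⟨h0, f⟩ | ⟨h0, f⟩ | ⟨h0, f⟩ | ⟨h0, f⟩ <;>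
    rcases hpack 1 with ⟨h1, g⟩ | ⟨h1, g⟩ | ⟨h1, g⟩ | ⟨h1, g⟩ <;>
      rcases hpack 2 with ⟨h2, k⟩ | ⟨h2, k⟩ | ⟨h2, k⟩ | ⟨h2, k⟩ <;>
        first
          | exact hne01 (h0.trans h1.symm)
          | exact hne02 (h0.trans h2.symm)
          | exact hne12 (h1.trans h2.symm)
          | exact core1 hℓ f g k
          | exact core1 hℓ f k g
          | exact core1 hℓ g f k
          | exact core1 hℓ g k f
          | exact core1 hℓ k f g
          | exact core1 hℓ k g f
          | exact core2 hℓ f g k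
          | exact core2 hℓ f k g
          | exact core2 hℓ g f k
          | exact core2 hℓ g k f
          | exact core2 hℓ k f g
          | exact core2 hℓ k g f
          | exact core3 hℓ f g k
          | exact core3 hℓ f k g
          | exact core3 hℓ g f k
          | exact core3 hℓ g k f
          | exact core3 hℓ k f g
          | exact core3 hℓ k g f
          | exact core4 hℓ f g k
          | exact core4 hℓ f k g
          | exact core4 hℓ g f k
          | exact core4 hℓ g k f
          | exact core4 hℓ k f g
          | exact core4 hℓ k g f
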